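/- Let δ ∈ (0, 1/16) and φ ∈ (0,1). If a graph G' (a (δ, δφ)-cut sparsifier of G with volume distortion at most factor (1±2δ)) is a (1+5δ)φ-expander, then G is a φ-expander. Specifically, for every cut S with Vol_G(S) ≤ Vol_G(S̄): Φ_G(S) ≥ ((1-2δ)/(1+δ))·Φ_{G'}(S) - δφ/(1+δ), and if Φ_{G'}(S) ≥ (1+5δ)φ then Φ_G(S) ≥ ((1+2δ-10δ²)/(1+δ))·φ > φ. -/
import Mathlib


/-- Let `δ ∈ (0, 1/16)`, `φ ∈ (0,1)`, and let `G'` be a `(δ, δφ)`-cut sparsifier of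
`G` with volume distortion at most `(1 ± 2δ)`. Then for every cut `S` with
`Vol_G(S) ≤ Vol_G(S̄)` (writing `Φ_H(S) = w_H(S,S̄)/min(Vol_H(S), Vol_H(S̄))`):
`Φ_G(S) ≥ ((1-2δ)/(1+δ))·Φ_{G'}(S) - δφ/(1+δ)`, and if `Φ_{G'}(S) ≥ (1+5δ)φ` then
`Φ_G(S) ≥ ((1+2δ-10δ²)/(1+δ))·φ > φ`; in particular, if `G'` is a
`(1+5δ)φ`-expander then `G` is a `φ`-expander. -/
theorem stmt_16 {V : Type*} [Fintype V] [DecidableEq V]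
    (wG wG' volG volG' : Finset V → ℝ) (φ δ : ℝ)
    (hφ : φ ∈ Set.Ioo (0 : ℝ) 1) (hδ : δ ∈ Set.Ioo (0 : ℝ) (1 / 16))
    (hwGnn : ∀ S, 0 ≤ wG S) (hwG'nn : ∀ S, 0 ≤ wG' S) (hvolpos : ∀ S, 0 < volG S)
    (hsparsifier : ∀ S : Finset V,
      (1 - δ) * wG S - (δ * φ) * volG S ≤ wG' S ∧
      wG' S ≤ (1 + δ) * wG S + (δ * φ) * volG S)
    (hvol : ∀ S : Finset V,
      (1 - 2 * δ) * volG S ≤ volG' S ∧ volG' S ≤ (1 + 2 * δ) * volG S) :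
    ∀ S : Finset V, volG S ≤ volG Sᶜ →
      ((1 - 2 * δ) / (1 + δ)) * (wG' S / min (volG' S) (volG' Sᶜ)) - (δ * φ) / (1 + δ)
          ≤ wG S / volG S ∧
      ((1 + 5 * δ) * φ ≤ wG' S / min (volG' S) (volG' Sᶜ) →
        ((1 + 2 * δ - 10 * δ ^ 2) / (1 + δ)) * φ ≤ wG S / volG S ∧
        φ < wG S / volG S) := by
  obtain ⟨hφ0, hφ1⟩ := hφ
  obtain ⟨hδ0, hδ16⟩ := hδ
  intro S hS
  have h1δ : (0:ℝ) < 1 + δ := by linarith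
  have h2δ : (0:ℝ) < 1 - 2 * δ := by linarith
  set M := min (volG' S) (volG' Sᶜ) with hMdef
  have hM : (1 - 2 * δ) * volG S ≤ M := by
    refine le_min (hvol S).1 ?_
    calc (1 - 2 * δ) * volG S ≤ (1 - 2 * δ) * volG Sᶜ := by nlinarith
    _ ≤ volG' Sᶜ := (hvol Sᶜ).1
  have hMpos : 0 < M := lt_of_lt_of_le (mul_pos h2δ (hvolpos S)) hM
  set q := wG' S / M with hqdef
  have hq0 : 0 ≤ q := div_nonneg (hwG'nn S) hMpos.le
  have hqM : q * M = wG' S := div_mul_cancel₀ _ hMpos.ne'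
  have key : (1 - 2 * δ) * q * volG S ≤ (1 + δ) * wG S + (δ * φ) * volG S := by
    calc (1 - 2 * δ) * q * volG S = q * ((1 - 2 * δ) * volG S) := by ring
    _ ≤ q * M := by nlinarith
    _ = wG' S := hqM
    _ ≤ (1 + δ) * wG S + (δ * φ) * volG S := (hsparsifier S).2
  have hv := hvolpos S
  have main : ((1 - 2 * δ) / (1 + δ)) * q - (δ * φ) / (1 + δ) ≤ wG S / volG S := by
    rw [le_div_iff₀ hv, div_mul_eq_mul_div, div_sub_div_same, div_mul_eq_mul_div, div_le_iff₀ h1δ]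
    nlinarith
  refine ⟨main, fun hΦ => ?_⟩
  have step : ((1 + 2 * δ - 10 * δ ^ 2) / (1 + δ)) * φ ≤
      ((1 - 2 * δ) / (1 + δ)) * q - (δ * φ) / (1 + δ) := by
    rw [div_mul_eq_mul_div, div_mul_eq_mul_div, div_sub_div_same, div_le_div_iff₀ h1δ h1δ]
    nlinarith [mul_le_mul_of_nonneg_right (mul_le_mul_of_nonneg_left hΦ h2δ.le) h1δ.le]
  have h1 : ((1 + 2 * δ - 10 * δ ^ 2) / (1 + δ)) * φ ≤ wG S / volG S := step.trans main
  refine ⟨h1, lt_of_lt_of_le ?_ h1⟩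
  rw [div_mul_eq_mul_div, lt_div_iff₀ h1δ]
  nlinarith [mul_pos hδ0 hφ0, mul_lt_mul_of_pos_right hδ16 (mul_pos hδ0 hφ0)]
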